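/- Let S = ⊕_{k=1}^{b} S_k(Γ_1(M)) with S_k := S_k(Γ_1(M)). The natural map T_Q(S) → ∏_{k=1}^{b} T_Q(S_k), given by restricting Hecke operators to each weight-graded piece, is an isomorphism of Q-algebras. -/

import Mathlib

/-!
STATEMENT 8: For S = ⊕_{k=1}^b S_k(Γ_1(M)), the natural map
T_ℚ(S) → ∏_{k=1}^b T_ℚ(S_k), restricting Hecke operators to the weight-graded pieces,
is an isomorphism of ℚ-algebras.  The summands S_k(Γ_1(M)) are modelled abstractly as
complex spaces V k with Hecke operators T k n and coefficient functionals a k n,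
together with the classically known facts as hypotheses: a_1(T_n g) = a_n g on each
summand (ha1), injectivity of the q-expansion map on each summand (hq) and on the
direct sum (hqtot), commutativity (hcomm), and existence of full Hecke-stable lattices
(hlat).  The natural map is pinned down by sending the diagonal Hecke operator T_n to
the tuple of its weight-k components.
-/

open TensorProduct in
theorem BC {η : Type} [Fintype η] {d : ℕ} (v : Fin d → (η → ℚ))
    (hv : LinearIndependent ℚ v) :
    LinearIndependent ℂ (fun j (e : η) => (algebraMap ℚ ℂ) (v j e)) := by
  classical
  let bd := Pi.basisFun ℚ (Fin d)
  let u : (Fin d → ℚ) →ₗ[ℚ] (η → ℚ) := bd.constr ℚ v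
  have hux : ∀ x : Fin d → ℚ, u x = ∑ j, x j • v j := by
    intro x
    rw [Module.Basis.constr_apply_fintype]
    simp [bd]
  have hu : Function.Injective u := by
    rw [← LinearMap.ker_eq_bot, LinearMap.ker_eq_bot']
    intro x hx
    rw [hux] at hx
    funext j
    exact Fintype.linearIndependent_iff.mp hv x hx j
  have hbc : Function.Injective (u.baseChange ℂ) := by
    have h1 : Function.Injective (u.lTensor ℂ) :=
      Module.Flat.lTensor_preserves_injective_linearMap u hu
    have heq : ⇑(u.baseChange ℂ) = ⇑(u.lTensor ℂ) := LinearMap.baseChange_eq_ltensor u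
    rw [heq]
    exact h1
  let Bd := bd.baseChange ℂ
  have h2 : LinearIndependent ℂ (fun j => u.baseChange ℂ (Bd j)) :=
    Bd.linearIndependent.map' _ (LinearMap.ker_eq_bot.mpr hbc)
  have h3 : ∀ j, u.baseChange ℂ (Bd j) = (1 : ℂ) ⊗ₜ[ℚ] v j := by
    intro j
    rw [Module.Basis.baseChange_apply, LinearMap.baseChange_tmul]
    congr 1
    rw [hux]
    simp [bd, Pi.single_apply, Finset.sum_ite_eq]
  rw [funext h3] at h2
  let Be := (Pi.basisFun ℚ η).baseChange ℂ
  have h4 := h2.map' Be.equivFun.toLinearMap Be.equivFun.ker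
  have h5 : (fun j => Be.equivFun ((1 : ℂ) ⊗ₜ[ℚ] v j)) =
      fun j (e : η) => (algebraMap ℚ ℂ) (v j e) := by
    funext j e
    simp only [Module.Basis.equivFun_apply, Be]
    rw [Module.Basis.baseChange_repr_tmul]
    simp [Pi.basisFun_repr, Algebra.smul_def, mul_comm]
  rw [← h5]
  exact h4

open Module in
set_option synthInstance.maxHeartbeats 1000000 in
set_option maxHeartbeats 4000000 in
theorem KEY {W : Type} [AddCommGroup W] [Module ℂ W]
    {ι : Type} [Fintype ι] [DecidableEq ι] (bas : Basis ι ℂ W)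
    (S : Set (Module.End ℂ W))
    (hrat : ∀ f ∈ S, ∀ i j, bas.repr (f (bas i)) j ∈ (algebraMap ℚ ℂ).range)
    (hSc : ∀ f ∈ S, ∀ g ∈ S, Commute f g)
    (aa : W →ₗ[ℂ] ℂ)
    (hnd : ∀ w : W, (∀ f ∈ S, aa (f w) = 0) → w = 0) :
    letI : Algebra ℚ (Module.End ℂ W) := Algebra.compHom _ (algebraMap ℚ ℂ)
    (Module.finrank ℚ (Algebra.adjoin ℚ S) = Module.finrank ℂ W
      ∧ FiniteDimensional ℚ (Algebra.adjoin ℚ S)) := by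
  letI : Algebra ℚ (Module.End ℂ W) := Algebra.compHom _ (algebraMap ℚ ℂ)
  haveI : FiniteDimensional ℂ W := Module.Finite.of_basis bas
  -- Part I : complex dimension of the ℂ-adjoin
  set Ac := Algebra.adjoin ℂ S with hAc
  have hcent : ∀ t ∈ Ac, ∀ f ∈ S, f * t = t * f := by
    intro t ht f hf
    have hle : Ac ≤ Subalgebra.centralizer ℂ S := by
      apply Algebra.adjoin_le
      intro g hg
      exact (Subalgebra.mem_centralizer_iff ℂ).mpr fun g' hg' => hSc g' hg' g hg
    exact (Subalgebra.mem_centralizer_iff ℂ).mp (hle ht) f hf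
  have key0 : ∀ t ∈ Ac, (∀ w, aa (t w) = 0) → t = 0 := by
    intro t ht h0
    ext w
    show t w = 0
    refine hnd (t w) fun f hf => ?_
    have hc : f (t w) = t (f w) := by
      calc f (t w) = (f * t) w := rfl
      _ = (t * f) w := by rw [hcent t ht f hf]
      _ = t (f w) := rfl
    rw [hc]
    exact h0 (f w)
  let Λ : Subalgebra.toSubmodule Ac →ₗ[ℂ] (W →ₗ[ℂ] ℂ) :=
    ((LinearMap.llcomp ℂ W W ℂ) aa) ∘ₗ (Subalgebra.toSubmodule Ac).subtype
  have hΛinj : Function.Injective Λ := by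
    rw [← LinearMap.ker_eq_bot, LinearMap.ker_eq_bot']
    intro t h0
    have : (t : Module.End ℂ W) = 0 := by
      refine key0 t t.2 fun w => ?_
      exact congrFun (congrArg (fun (g : W →ₗ[ℂ] ℂ) => (g : W → ℂ)) h0) w
    exact Subtype.ext this
  have hΛ'inj : Function.Injective Λ.flip := by
    rw [← LinearMap.ker_eq_bot, LinearMap.ker_eq_bot']
    intro w h0
    refine hnd w fun f hf => ?_
    have := congrFun (congrArg (fun (g : Subalgebra.toSubmodule Ac →ₗ[ℂ] ℂ) => (g : _ → ℂ)) h0)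
      ⟨f, Algebra.subset_adjoin hf⟩
    exact this
  have h1 : finrank ℂ (Subalgebra.toSubmodule Ac) ≤ finrank ℂ W := by
    have := LinearMap.finrank_le_finrank_of_injective hΛinj
    rwa [Subspace.dual_finrank_eq] at this
  have h2 : finrank ℂ W ≤ finrank ℂ (Subalgebra.toSubmodule Ac) := by
    have := LinearMap.finrank_le_finrank_of_injective hΛ'inj
    rwa [Subspace.dual_finrank_eq] at this
  have hfinAc : finrank ℂ (Subalgebra.toSubmodule Ac) = finrank ℂ W := le_antisymm h1 h2
  clear h1 h2 hΛinj hΛ'inj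
  -- Part II : rational structure
  classical
  let MX : (Module.End ℂ W) ≃ₗ[ℂ] Matrix ι ι ℂ := LinearMap.toMatrix bas bas
  let Sub : Subring ℂ := (algebraMap ℚ ℂ).range
  have hMXmul : ∀ f g : Module.End ℂ W, MX (f * g) = MX f * MX g := by
    intro f g
    exact LinearMap.toMatrix_mul bas f g
  let P : Subalgebra ℚ (Module.End ℂ W) :=
    { carrier := {f | ∀ i j, MX f i j ∈ Sub}
      mul_mem' := by
        intro f g hf hg i j
        rw [hMXmul f g, Matrix.mul_apply]
        exact Subring.sum_mem _ fun l _ => Sub.mul_mem (hf i l) (hg l j)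
      one_mem' := by
        intro i j
        have h1 : MX 1 = 1 := LinearMap.toMatrix_one bas
        rw [h1, Matrix.one_apply]
        split
        · exact Sub.one_mem
        · exact Sub.zero_mem
      add_mem' := by
        intro f g hf hg i j
        rw [map_add]
        exact Sub.add_mem (hf i j) (hg i j)
      zero_mem' := by
        intro i j
        rw [map_zero]
        exact Sub.zero_mem
      algebraMap_mem' := by
        intro q i j
        have h1 : algebraMap ℚ (Module.End ℂ W) q
            = algebraMap ℂ (Module.End ℂ W) (algebraMap ℚ ℂ q) := rfl
        rw [h1, LinearMap.toMatrix_algebraMap]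
        rw [Matrix.scalar_apply, Matrix.diagonal_apply]
        split
        · exact ⟨q, rfl⟩
        · exact Sub.zero_mem }
  set Aq := Algebra.adjoin ℚ S with hAq
  have hSP : S ⊆ (P : Set (Module.End ℂ W)) := by
    intro f hf i j
    rw [LinearMap.toMatrix_apply]
    exact hrat f hf j i
  have hAqP : Aq ≤ P := Algebra.adjoin_le hSP
  -- rational coordinates
  have hq0 : ∀ z : ℂ, z ∈ Sub → ∃ q : ℚ, algebraMap ℚ ℂ q = z := fun z hz => hz
  choose q0 hq0spec using hq0
  let Φ0 : P → (ι × ι → ℚ) := fun f p => q0 (MX f.1 p.1 p.2) (f.2 p.1 p.2)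
  have hΦ0 : ∀ (f : P) p, algebraMap ℚ ℂ (Φ0 f p) = MX f.1 p.1 p.2 := by
    intro f p
    exact hq0spec _ _
  have hinjQ : Function.Injective (algebraMap ℚ ℂ) := (algebraMap ℚ ℂ).injective
  let Φ : P →ₗ[ℚ] (ι × ι → ℚ) :=
    { toFun := Φ0
      map_add' := by
        intro f g
        funext p
        apply hinjQ
        rw [hΦ0, Pi.add_apply, map_add, hΦ0, hΦ0]
        have h2 : ((f + g : P) : Module.End ℂ W) = f.1 + g.1 := rfl
        rw [h2, map_add]
        rfl
      map_smul' := by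
        intro q f
        funext p
        apply hinjQ
        rw [RingHom.id_apply]
        have h2 : ((q • f : P) : Module.End ℂ W) = algebraMap ℚ ℂ q • f.1 := rfl
        have h3 : (q • Φ0 f) p = q * Φ0 f p := rfl
        rw [hΦ0, h3, map_mul, hΦ0, h2, map_smul]
        rfl }
  have hΦinj : Function.Injective Φ := by
    intro f g hfg
    apply Subtype.ext
    apply MX.injective
    funext i j
    have := congrFun hfg (i, j)
    have h1 := hΦ0 f (i, j)
    have h2 := hΦ0 g (i, j)
    show MX f.1 i j = MX g.1 i j
    rw [← h1, ← h2]
    exact congrArg _ this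
  haveI : FiniteDimensional ℚ P := FiniteDimensional.of_injective Φ hΦinj
  haveI hfdAq : FiniteDimensional ℚ Aq :=
    FiniteDimensional.of_injective (Subalgebra.inclusion hAqP).toLinearMap
      (Subalgebra.inclusion_injective hAqP)
  set d := finrank ℚ Aq with hd
  let u : Basis (Fin d) ℚ Aq := Module.finBasis ℚ Aq
  let uE : Fin d → Module.End ℂ W := fun j => ((u j : Aq) : Module.End ℂ W)
  have hsmulQ : ∀ (q : ℚ) (y : Module.End ℂ W), q • y = (algebraMap ℚ ℂ q) • y :=
    fun _ _ => rfl
  have hcoesmul : ∀ (q : ℚ) (y : Aq), ((q • y : Aq) : Module.End ℂ W) = q • (y : Module.End ℂ W) :=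
    fun _ _ => rfl
  have hspanQ : ∀ x, x ∈ Aq → x ∈ Submodule.span ℂ (Set.range uE) := by
    intro x hx
    have hsum := u.sum_repr ⟨x, hx⟩
    have hsum' : ∑ j, u.repr ⟨x, hx⟩ j • uE j = x := by
      calc ∑ j, u.repr ⟨x, hx⟩ j • uE j
          = ((∑ j, u.repr ⟨x, hx⟩ j • u j : Aq) : Module.End ℂ W) := by
            rw [AddSubmonoidClass.coe_finset_sum]
            exact Finset.sum_congr rfl fun i _ => (hcoesmul _ _).symm
        _ = x := by rw [hsum]
    rw [← hsum']
    refine Submodule.sum_mem _ fun j _ => ?_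
    rw [hsmulQ]
    exact Submodule.smul_mem _ _ (Submodule.subset_span ⟨j, rfl⟩)
  have hQC : ∀ x, x ∈ Aq → x ∈ Ac := by
    intro x hx
    rw [hAq] at hx
    induction hx using Algebra.adjoin_induction with
    | mem g hg => exact Algebra.subset_adjoin hg
    | algebraMap q => exact Ac.algebraMap_mem ((algebraMap ℚ ℂ) q)
    | add x y _ _ hx hy => exact Ac.add_mem hx hy
    | mul x y _ _ hx hy => exact Ac.mul_mem hx hy
  have hspan : Submodule.span ℂ (Set.range uE) = Subalgebra.toSubmodule Ac := by
    apply le_antisymm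
    · rw [Submodule.span_le]
      rintro _ ⟨j, rfl⟩
      exact hQC _ (u j).2
    · rw [hAc, Algebra.adjoin_eq_span, Submodule.span_le]
      intro x hx
      refine hspanQ x ?_
      exact Submonoid.closure_induction (fun g hg => Algebra.subset_adjoin hg)
        Aq.one_mem (fun p q _ _ hp hq => Aq.mul_mem hp hq) hx
  let c : Fin d → (ι × ι → ℚ) := fun j => Φ ⟨uE j, hAqP (u j).2⟩
  have hc : ∀ j p, algebraMap ℚ ℂ (c j p) = MX (uE j) p.1 p.2 := fun j p => hΦ0 _ p
  have hcind : LinearIndependent ℚ c := by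
    rw [Fintype.linearIndependent_iff]
    intro g hg j
    have hyval : ((∑ j, g j • u j : Aq) : Module.End ℂ W) = ∑ j, g j • uE j := by
      rw [AddSubmonoidClass.coe_finset_sum]
      exact Finset.sum_congr rfl fun i _ => hcoesmul _ _
    have hzero : (∑ j, g j • u j : Aq) = 0 := by
      apply Subtype.ext
      rw [hyval]
      show ∑ j, g j • uE j = (0 : Module.End ℂ W)
      apply MX.injective
      rw [map_zero, map_sum]
      funext i l
      have h3 : ∀ j, MX (g j • uE j) = algebraMap ℚ ℂ (g j) • MX (uE j) := by
        intro j
        rw [hsmulQ, map_smul]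
      have h4 : (∑ j, MX (g j • uE j)) i l = ∑ j, algebraMap ℚ ℂ (g j) * MX (uE j) i l := by
        rw [Matrix.sum_apply]
        refine Finset.sum_congr rfl fun j _ => ?_
        rw [h3 j]
        rfl
      show (∑ j, MX (g j • uE j)) i l = (0 : Matrix ι ι ℂ) i l
      rw [h4]
      have h5 : ∀ j, MX (uE j) i l = algebraMap ℚ ℂ (c j (i, l)) := fun j => (hc j (i, l)).symm
      have h6 : ∑ j, algebraMap ℚ ℂ (g j) * MX (uE j) i l
          = algebraMap ℚ ℂ (∑ j, g j * c j (i, l)) := by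
        rw [map_sum]
        exact Finset.sum_congr rfl fun j _ => by rw [h5 j, ← map_mul]
      rw [h6]
      have h7 : ∑ j, g j * c j (i, l) = (∑ j, g j • c j) (i, l) := by
        rw [Finset.sum_apply]
        rfl
      rw [h7, hg]
      simp
    have := Fintype.linearIndependent_iff.mp u.linearIndependent g hzero
    exact this j
  have hEind : LinearIndependent ℂ uE := by
    have hbc := BC c hcind
    let L : ((ι × ι) → ℂ) →ₗ[ℂ] Matrix ι ι ℂ :=
      { toFun := fun gg => Matrix.of fun i l => gg (i, l)
        map_add' := fun _ _ => rfl
        map_smul' := fun _ _ => rfl }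
    let Ψ : ((ι × ι) → ℂ) →ₗ[ℂ] Module.End ℂ W := (MX.symm : Matrix ι ι ℂ ≃ₗ[ℂ] Module.End ℂ W).toLinearMap ∘ₗ L
    have hΨ : Function.Injective Ψ := by
      intro x y hxy
      have h2 : L x = L y := MX.symm.injective hxy
      funext p
      have h3 := congrFun (congrFun (congrArg (fun (m : Matrix ι ι ℂ) (i : ι) (l : ι) => m i l) h2) p.1) p.2
      exact h3
    have h3 : (fun j => Ψ (fun p => algebraMap ℚ ℂ (c j p))) = uE := by
      funext j
      apply MX.injective
      show MX (MX.symm (L fun p => algebraMap ℚ ℂ (c j p))) = MX (uE j)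
      rw [MX.apply_symm_apply]
      funext i l
      show algebraMap ℚ ℂ (c j (i, l)) = MX (uE j) i l
      exact hc j (i, l)
    rw [← h3]
    exact hbc.map' Ψ (LinearMap.ker_eq_bot.mpr hΨ)
  have hcard : finrank ℂ (Submodule.span ℂ (Set.range uE)) = d := by
    rw [finrank_span_eq_card hEind, Fintype.card_fin]
  rw [hspan] at hcard
  exact ⟨hcard.symm.trans hfinAc, hfdAq⟩

private theorem ZQ {W : Type} [AddCommGroup W] [Module ℂ W] {ι : Type} (bas : Module.Basis ι ℂ W)
    {x : W} (hx : x ∈ Submodule.span ℤ (Set.range bas)) (j : ι) :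
    bas.repr x j ∈ (algebraMap ℚ ℂ).range := by
  classical
  induction hx using Submodule.span_induction with
  | mem y hy =>
    obtain ⟨i, rfl⟩ := hy
    rw [bas.repr_self, Finsupp.single_apply]
    split
    · exact ⟨1, by simp⟩
    · exact ⟨0, by simp⟩
  | zero => exact ⟨0, by simp⟩
  | add y z _ _ hy hz =>
    rw [map_add, Finsupp.add_apply]
    exact Subring.add_mem _ hy hz
  | smul z y _ hy =>
    have h1 : bas.repr (z • y) = z • bas.repr y := map_zsmul bas.repr z y
    rw [h1, Finsupp.smul_apply, zsmul_eq_mul]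
    exact Subring.mul_mem _ ⟨(z : ℚ), by simp⟩ hy


set_option synthInstance.maxHeartbeats 1000000 in
set_option maxHeartbeats 1000000 in
theorem stmt8 (b : ℕ)
    (V : Fin b → Type) [∀ k, AddCommGroup (V k)] [∀ k, Module ℂ (V k)]
    (T : ∀ k : Fin b, ℕ → Module.End ℂ (V k))
    (a : ∀ k : Fin b, ℕ → V k →ₗ[ℂ] ℂ)
    (ha1 : ∀ k (n : ℕ), 1 ≤ n → ∀ g : V k, a k 1 (T k n g) = a k n g)
    (hq : ∀ k (g : V k), (∀ n : ℕ, 1 ≤ n → a k n g = 0) → g = 0)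
    (hqtot : ∀ f : ∀ k, V k, (∀ n : ℕ, 1 ≤ n → ∑ k, a k n (f k) = 0) → f = 0)
    (hcomm : ∀ k (n m : ℕ), Commute (T k n) (T k m))
    (hlat : ∀ k, ∃ (ι : Type) (_ : Fintype ι) (bas : Module.Basis ι ℂ (V k)),
      ∀ (n : ℕ+) (i : ι), T k (n : ℕ) (bas i) ∈ Submodule.span ℤ (Set.range bas))
    (Ttot : ℕ → Module.End ℂ (∀ k, V k))
    (hT : ∀ n, Ttot n = LinearMap.pi fun k => (T k n) ∘ₗ LinearMap.proj k) :
    letI : Algebra ℚ (Module.End ℂ (∀ k, V k)) :=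
      Algebra.compHom _ (algebraMap ℚ ℂ)
    letI : ∀ k, Algebra ℚ (Module.End ℂ (V k)) := fun k =>
      Algebra.compHom _ (algebraMap ℚ ℂ)
    ∃ φ : Algebra.adjoin ℚ (Set.range fun n : ℕ+ => Ttot (n : ℕ)) →ₐ[ℚ]
        Π k : Fin b, Algebra.adjoin ℚ (Set.range fun n : ℕ+ => T k (n : ℕ)),
      (∀ n : ℕ+, φ ⟨Ttot (n : ℕ), Algebra.subset_adjoin ⟨n, rfl⟩⟩ =
        fun k => ⟨T k (n : ℕ), Algebra.subset_adjoin ⟨n, rfl⟩⟩) ∧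
      Function.Bijective φ := by
  classical
  letI instE : Algebra ℚ (Module.End ℂ (∀ k, V k)) := Algebra.compHom _ (algebraMap ℚ ℂ)
  letI instEk : ∀ k, Algebra ℚ (Module.End ℂ (V k)) := fun k =>
    Algebra.compHom _ (algebraMap ℚ ℂ)
  choose ι ifin bas hbas using hlat
  haveI : ∀ k, Fintype (ι k) := ifin
  haveI : ∀ k, FiniteDimensional ℂ (V k) := fun k =>
    Module.Finite.of_basis (bas k)
  -- notation
  set Ak := fun k => Algebra.adjoin ℚ (Set.range fun n : ℕ+ => T k (n : ℕ)) with hAk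
  set B := Algebra.adjoin ℚ (Set.range fun n : ℕ+ => Ttot (n : ℕ)) with hB
  -- per-weight application of KEY
  have keyk : ∀ k, (Module.finrank ℚ (Ak k) = Module.finrank ℂ (V k)
      ∧ FiniteDimensional ℚ (Ak k)) := by
    intro k
    refine KEY (bas k) _ ?_ ?_ (a k 1) ?_
    · rintro f ⟨n, rfl⟩ i j
      exact ZQ (bas k) (hbas k n i) j
    · rintro f ⟨n, rfl⟩ g ⟨m, rfl⟩
      exact hcomm k n m
    · intro w hw
      refine hq k w fun n hn => ?_
      have := hw (T k n) ⟨⟨n, hn⟩, rfl⟩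
      rw [ha1 k n hn w] at this
      exact this
  haveI hfinAk : ∀ k, FiniteDimensional ℚ (Ak k) := fun k => (keyk k).2
  -- application of KEY to the product
  have hTapp : ∀ (n : ℕ) (x : ∀ k, V k) (k), (Ttot n x) k = T k n (x k) := by
    intro n x k
    rw [hT n]
    rfl
  have hTsingle : ∀ (n : ℕ) (k) (x : V k),
      Ttot n (Pi.single k x) = Pi.single k (T k n x) := by
    intro n k x
    funext k'
    rw [hTapp]
    by_cases h : k' = k
    · subst h
      rw [Pi.single_eq_same, Pi.single_eq_same]
    · rw [Pi.single_eq_of_ne h, Pi.single_eq_of_ne h, map_zero]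
  have keytot : (Module.finrank ℚ B = Module.finrank ℂ (∀ k, V k)
      ∧ FiniteDimensional ℚ B) := by
    refine KEY (Pi.basis bas) _ ?_ ?_ (∑ k, (a k 1) ∘ₗ LinearMap.proj k) ?_
    · rintro f ⟨n, rfl⟩ i j
      refine ZQ (Pi.basis bas) ?_ j
      obtain ⟨k, i⟩ := i
      rw [Pi.basis_apply]
      show Ttot n (Pi.single k (bas k i)) ∈ _
      rw [hTsingle]
      have h1 : T k (n : ℕ) (bas k i) ∈ Submodule.span ℤ (Set.range (bas k)) := hbas k n i
      have h2 := Submodule.apply_mem_span_image_of_mem_span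
        ((LinearMap.single ℂ V k).restrictScalars ℤ) h1
      refine Submodule.span_le.mpr ?_ h2
      rintro _ ⟨_, ⟨i', rfl⟩, rfl⟩
      apply Submodule.subset_span
      exact ⟨⟨k, i'⟩, by rw [Pi.basis_apply]; rfl⟩
    · rintro f ⟨n, rfl⟩ g ⟨m, rfl⟩
      show Ttot n * Ttot m = Ttot m * Ttot n
      refine LinearMap.ext fun x => funext fun k => ?_
      show (Ttot n (Ttot m x)) k = (Ttot m (Ttot n x)) k
      rw [hTapp, hTapp, hTapp, hTapp]
      have := DFunLike.congr_fun (hcomm k n m) (x k)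
      rw [Module.End.mul_apply, Module.End.mul_apply] at this
      exact this
    · intro w hw
      refine hqtot w fun n hn => ?_
      have h1 := hw (Ttot n) ⟨⟨n, hn⟩, rfl⟩
      rw [LinearMap.sum_apply] at h1
      have h2 : ∀ k, ((a k 1) ∘ₗ LinearMap.proj k) (Ttot n w) = a k n (w k) := by
        intro k
        show a k 1 ((Ttot n w) k) = a k n (w k)
        rw [hTapp, ha1 k n hn]
      rw [Finset.sum_congr rfl fun k _ => h2 k] at h1
      exact h1
  haveI hfinB : FiniteDimensional ℚ B := keytot.2
  -- the block-diagonal embedding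
  let ψ : (Π k, Module.End ℂ (V k)) →ₐ[ℚ] Module.End ℂ (∀ k, V k) :=
    { toFun := fun f => LinearMap.pi fun k => (f k) ∘ₗ LinearMap.proj k
      map_one' := rfl
      map_mul' := fun f g => rfl
      map_zero' := rfl
      map_add' := fun f g => rfl
      commutes' := fun q => rfl }
  have hψval : ∀ (f : Π k, Module.End ℂ (V k)) (x : ∀ k, V k) (k),
      (ψ f x) k = f k (x k) := fun _ _ _ => rfl
  have hψinj : Function.Injective ψ := by
    intro f g hfg
    funext k
    refine LinearMap.ext fun y => ?_
    have h1 := congrArg (fun (t : Module.End ℂ (∀ k, V k)) => t (Pi.single k y) k) hfg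
    simp only [hψval, Pi.single_eq_same] at h1
    exact h1
  set g0 : ℕ+ → (Π k, Module.End ℂ (V k)) := fun n => fun k => T k (n : ℕ) with hg0
  have hψg0 : ∀ n : ℕ+, ψ (g0 n) = Ttot (n : ℕ) := fun n => (hT (n : ℕ)).symm
  have heq : (Algebra.adjoin ℚ (Set.range g0)).map ψ = B := by
    rw [AlgHom.map_adjoin, hB]
    congr 1
    rw [← Set.range_comp]
    exact congrArg Set.range (funext fun n => hψg0 n)
  let E : Algebra.adjoin ℚ (Set.range g0) ≃ₐ[ℚ] B :=
    ((Algebra.adjoin ℚ (Set.range g0)).equivMapOfInjective ψ hψinj).trans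
      (Subalgebra.equivOfEq _ _ heq)
  have hmem : ∀ (y : Algebra.adjoin ℚ (Set.range g0)) (k),
      (y : Π k, Module.End ℂ (V k)) k ∈ Ak k := by
    intro y k
    have hle : Algebra.adjoin ℚ (Set.range g0) ≤
        (Ak k).comap (Pi.evalAlgHom ℚ (fun k => Module.End ℂ (V k)) k) := by
      apply Algebra.adjoin_le
      rintro _ ⟨n, rfl⟩
      exact Algebra.subset_adjoin ⟨n, rfl⟩
    exact hle y.2
  let χ : Algebra.adjoin ℚ (Set.range g0) →ₐ[ℚ] Π k, Ak k :=
    { toFun := fun y => fun k => ⟨(y : Π k, Module.End ℂ (V k)) k, hmem y k⟩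
      map_one' := funext fun k => Subtype.ext rfl
      map_mul' := fun y y' => funext fun k => Subtype.ext rfl
      map_zero' := funext fun k => Subtype.ext rfl
      map_add' := fun y y' => funext fun k => Subtype.ext rfl
      commutes' := fun q => funext fun k => Subtype.ext rfl }
  have hχval : ∀ (y : Algebra.adjoin ℚ (Set.range g0)) (k),
      ((χ y k : Ak k) : Module.End ℂ (V k)) = (y : Π k, Module.End ℂ (V k)) k :=
    fun _ _ => rfl
  have hχinj : Function.Injective χ := by
    intro y y' hyy
    apply Subtype.ext
    funext k
    exact congrArg Subtype.val (congrFun hyy k)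
  refine ⟨χ.comp E.symm.toAlgHom, ?_, ?_⟩
  · intro n
    have hE : E ⟨g0 n, Algebra.subset_adjoin ⟨n, rfl⟩⟩
        = ⟨Ttot (n : ℕ), Algebra.subset_adjoin ⟨n, rfl⟩⟩ := by
      apply Subtype.ext
      show ψ (g0 n) = Ttot (n : ℕ)
      exact hψg0 n
    have hEs : E.symm ⟨Ttot (n : ℕ), Algebra.subset_adjoin ⟨n, rfl⟩⟩
        = ⟨g0 n, Algebra.subset_adjoin ⟨n, rfl⟩⟩ := by
      rw [← hE, AlgEquiv.symm_apply_apply]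
    show χ (E.symm ⟨Ttot (n : ℕ), Algebra.subset_adjoin ⟨n, rfl⟩⟩) = _
    rw [hEs]
    funext k
    apply Subtype.ext
    exact hχval _ k
  · have hfr : Module.finrank ℚ B = Module.finrank ℚ (Π k, Ak k) := by
      rw [keytot.1, Module.finrank_pi_fintype ℚ, Module.finrank_pi_fintype ℂ]
      exact Finset.sum_congr rfl fun k _ => ((keyk k).1).symm
    have hinj : Function.Injective (χ.comp E.symm.toAlgHom) := by
      have hco : ⇑(χ.comp E.symm.toAlgHom) = ⇑χ ∘ ⇑E.symm := rfl
      rw [hco]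
      exact Function.Injective.comp hχinj E.symm.injective
    refine ⟨hinj, ?_⟩
    have := (LinearMap.injective_iff_surjective_of_finrank_eq_finrank
      (K := ℚ) (V := B) (V₂ := Π k, Ak k) (f := (χ.comp E.symm.toAlgHom).toLinearMap) hfr).mp hinj
    exact this
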